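/- Let τ′ > 0, η > 0, C > 0, C_z > 0, ϑ ∈ (0,1), θ₁ ∈ (0,1), δ > 0, and let (k_n) be a sequence of positive integers with k_n → ∞. Suppose (a_{n,j})_{n,j ≥ 1} are nonnegative reals and (m_n) nonnegative reals with m_n ≤ τ′/n, satisfying the three regime bounds for all sufficiently large n: (i) a_{n,j} = 0 for all 1 ≤ j ≤ η ln n; (ii) a_{n,j} ≤ (τ′/n)(C ϑ^{j} n^{1/2} + C_z) n^{−1/2} for all η ln n < j ≤ (ln n)^{1+δ}; (iii) |a_{n,j} − m_n²| ≤ C(n^{−2} + n² θ₁^{⌊j/2⌋}) for all j > (ln n)^{1+δ}. Then lim_{n→∞} n · ∑_{j=1}^{⌊n/k_n⌋} a_{n,j} = 0. -/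

import Mathlib

open Filter

/-- Auxiliary: `(log n)^(1+δ) * ϑ^(η log n) → 0`. -/
lemma aux_log_pow_rpow_zero {η ϑ δ : ℝ} (hη : 0 < η) (hϑ0 : 0 < ϑ) (hϑ1 : ϑ < 1)
    (hδ : 0 < δ) :
    Tendsto (fun n : ℕ => (Real.log n) ^ (1 + δ) * ϑ ^ (η * Real.log n))
      atTop (nhds 0) := by
  have hc : 0 < -(η * Real.log ϑ) := by
    have := Real.log_neg hϑ0 hϑ1
    nlinarith
  have base := tendsto_rpow_mul_exp_neg_mul_atTop_nhds_zero (1 + δ) _ hc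
  have hlog : Tendsto (fun n : ℕ => Real.log n) atTop atTop :=
    Real.tendsto_log_atTop.comp tendsto_natCast_atTop_atTop
  refine (base.comp hlog).congr (fun n => ?_)
  have : ϑ ^ (η * Real.log n) = Real.exp (-(-(η * Real.log ϑ)) * Real.log n) := by
    rw [Real.rpow_def_of_pos hϑ0]; ring_nf
  simp only [Function.comp]
  rw [this]

/-- Auxiliary: `(log n)^(1+δ) * n^(-(1/2)) → 0`. -/
lemma aux_log_pow_inv_sqrt_zero {δ : ℝ} (hδ : 0 < δ) :
    Tendsto (fun n : ℕ => (Real.log n) ^ (1 + δ) * (n : ℝ) ^ (-(1 : ℝ) / 2))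
      atTop (nhds 0) := by
  have base := tendsto_rpow_mul_exp_neg_mul_atTop_nhds_zero (1 + δ) (1 / 2) (by norm_num)
  have hlog : Tendsto (fun n : ℕ => Real.log n) atTop atTop :=
    Real.tendsto_log_atTop.comp tendsto_natCast_atTop_atTop
  refine (base.comp hlog).congr' ?_
  filter_upwards [eventually_ge_atTop 1] with n hn
  have hn0 : (0 : ℝ) < n := by exact_mod_cast hn
  simp only [Function.comp]
  rw [Real.rpow_def_of_pos hn0]
  ring_nf

/-- Auxiliary: `n^4 * θ₁^(((log n)^(1+δ) - 1)/2) → 0`. -/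
lemma aux_n4_theta_zero {θ₁ δ : ℝ} (hθ0 : 0 < θ₁) (hθ1 : θ₁ < 1) (hδ : 0 < δ) :
    Tendsto (fun n : ℕ => (n : ℝ) ^ (4 : ℕ) *
        θ₁ ^ (((Real.log n) ^ (1 + δ) - 1) / 2)) atTop (nhds 0) := by
  have hlogθ : Real.log θ₁ < 0 := Real.log_neg hθ0 hθ1
  -- exponent tends to -∞
  have hE : Tendsto (fun y : ℝ => 4 * y + Real.log θ₁ * ((y ^ (1 + δ) - 1) / 2))
      atTop atBot := by
    have h1 : Tendsto (fun y : ℝ => y * (4 + Real.log θ₁ / 2 * y ^ δ)) atTop atBot := by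
      refine Tendsto.atTop_mul_atBot₀ tendsto_id ?_
      have hneg : Real.log θ₁ / 2 < 0 := by linarith
      have := (tendsto_const_mul_atBot_of_neg hneg).mpr (tendsto_rpow_atTop hδ)
      simpa using tendsto_atBot_add_const_left _ 4 this
    have h2 := tendsto_atBot_add_const_right _ (-(Real.log θ₁ / 2)) h1
    refine h2.congr' ?_
    filter_upwards [eventually_ge_atTop (0 : ℝ)] with y hy
    have hpow : y * y ^ δ = y ^ (1 + δ) := by
      rw [Real.rpow_add' hy (by positivity), Real.rpow_one]
    linear_combination (Real.log θ₁ / 2) * hpow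
  have hlog : Tendsto (fun n : ℕ => Real.log n) atTop atTop :=
    Real.tendsto_log_atTop.comp tendsto_natCast_atTop_atTop
  have base := Real.tendsto_exp_atBot.comp (hE.comp hlog)
  refine base.congr' ?_
  filter_upwards [eventually_ge_atTop 1] with n hn
  have hn0 : (0 : ℝ) < n := by exact_mod_cast hn
  simp only [Function.comp]
  rw [Real.exp_add, Real.rpow_def_of_pos hθ0]
  congr 1
  rw [show (4 : ℝ) * Real.log n = Real.log ((n : ℝ) ^ (4 : ℕ)) by
        rw [Real.log_pow]; push_cast; ring,
    Real.exp_log (by positivity)]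

set_option maxHeartbeats 1000000 in
/-- Condition `D'_q(u_n)` from the three regime bounds: no short returns up to `η ln n`,
the growth lemma bound up to `(ln n)^{1+δ}`, and decay of correlations beyond. -/
theorem stmt14 (τ' η C Cz ϑ θ₁ δ : ℝ)
    (hτ' : 0 < τ') (hη : 0 < η) (hC : 0 < C) (hCz : 0 < Cz)
    (hϑ : ϑ ∈ Set.Ioo (0 : ℝ) 1) (hθ₁ : θ₁ ∈ Set.Ioo (0 : ℝ) 1) (hδ : 0 < δ)
    (k : ℕ → ℕ) (hkpos : ∀ n, 0 < k n) (hk : Tendsto k atTop atTop)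
    (a : ℕ → ℕ → ℝ) (ha0 : ∀ n j, 0 ≤ a n j)
    (m : ℕ → ℝ) (hm0 : ∀ n, 0 ≤ m n) (hm : ∀ n : ℕ, 1 ≤ n → m n ≤ τ' / n)
    (hregimes : ∃ N : ℕ, ∀ n : ℕ, N ≤ n →
      (∀ j : ℕ, 1 ≤ j → (j : ℝ) ≤ η * Real.log n → a n j = 0) ∧
      (∀ j : ℕ, η * Real.log n < (j : ℝ) → (j : ℝ) ≤ (Real.log n) ^ (1 + δ) →
        a n j ≤ (τ' / n) * (C * ϑ ^ j * (n : ℝ) ^ ((1 : ℝ) / 2) + Cz) *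
          (n : ℝ) ^ (-(1 : ℝ) / 2)) ∧
      (∀ j : ℕ, (Real.log n) ^ (1 + δ) < (j : ℝ) →
        |a n j - (m n) ^ 2| ≤ C * ((n : ℝ)⁻¹ ^ 2 + (n : ℝ) ^ 2 * θ₁ ^ (j / 2)))) :
    Tendsto (fun n : ℕ => (n : ℝ) * ∑ j ∈ Finset.Icc 1 (n / k n), a n j)
      atTop (nhds 0) := by
  obtain ⟨hϑ0, hϑ1⟩ := hϑ
  obtain ⟨hθ0, hθ1⟩ := hθ₁
  obtain ⟨N, hN⟩ := hregimes
  have hBlim : Tendsto (fun n : ℕ =>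
      τ' * C * ((Real.log n) ^ (1 + δ) * ϑ ^ (η * Real.log n))
      + τ' * Cz * ((Real.log n) ^ (1 + δ) * (n : ℝ) ^ (-(1 : ℝ) / 2))
      + (τ' ^ 2 + C) * ((k n : ℝ))⁻¹
      + C * ((n : ℝ) ^ (4 : ℕ) * θ₁ ^ (((Real.log n) ^ (1 + δ) - 1) / 2)))
      atTop (nhds 0) := by
    have t1 := (aux_log_pow_rpow_zero hη hϑ0 hϑ1 hδ).const_mul (τ' * C)
    have t2 := (aux_log_pow_inv_sqrt_zero hδ).const_mul (τ' * Cz)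
    have t3 : Tendsto (fun n : ℕ => (τ' ^ 2 + C) * ((k n : ℝ))⁻¹) atTop (nhds 0) := by
      have : Tendsto (fun n : ℕ => ((k n : ℝ))⁻¹) atTop (nhds 0) :=
        (tendsto_natCast_atTop_atTop.comp hk).inv_tendsto_atTop
      simpa using this.const_mul (τ' ^ 2 + C)
    have t4 := (aux_n4_theta_zero hθ0 hθ1 hδ).const_mul C
    have := ((t1.add t2).add t3).add t4
    simpa using this
  have key : ∀ᶠ n : ℕ in atTop,
      (n : ℝ) * ∑ j ∈ Finset.Icc 1 (n / k n), a n j ≤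
      τ' * C * ((Real.log n) ^ (1 + δ) * ϑ ^ (η * Real.log n))
      + τ' * Cz * ((Real.log n) ^ (1 + δ) * (n : ℝ) ^ (-(1 : ℝ) / 2))
      + (τ' ^ 2 + C) * ((k n : ℝ))⁻¹
      + C * ((n : ℝ) ^ (4 : ℕ) * θ₁ ^ (((Real.log n) ^ (1 + δ) - 1) / 2)) := by
    filter_upwards [eventually_ge_atTop N, eventually_ge_atTop 3] with n hnN hn3
    obtain ⟨h1, h2, h3⟩ := hN n hnN
    have hn0 : (0 : ℝ) < n := by
      have : (0 : ℕ) < n := by omega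
      exact_mod_cast this
    have hne : (n : ℝ) ≠ 0 := hn0.ne'
    have hlog1 : 1 ≤ Real.log n := by
      rw [Real.le_log_iff_exp_le hn0]
      calc Real.exp 1 ≤ 2.7182818286 := Real.exp_one_lt_d9.le
        _ ≤ 3 := by norm_num
        _ ≤ (n : ℝ) := by exact_mod_cast hn3
    set Ln : ℝ := (Real.log n) ^ (1 + δ) with hLn
    have hL0 : 0 ≤ Ln := Real.rpow_nonneg (by linarith) _
    set M : ℕ := n / k n with hM
    set t : ℕ := min M (Nat.floor Ln) with ht
    have htM : t ≤ M := min_le_left _ _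
    have htL : (t : ℝ) ≤ Ln :=
      le_trans (Nat.cast_le.mpr (min_le_right _ _)) (Nat.floor_le hL0)
    set u : ℝ := (τ' / n) * (C * ϑ ^ (η * Real.log n) * (n : ℝ) ^ ((1 : ℝ) / 2) + Cz) *
      (n : ℝ) ^ (-(1 : ℝ) / 2) with hu
    have hu0 : 0 ≤ u := by
      rw [hu]
      have := Real.rpow_nonneg hϑ0.le (η * Real.log n)
      positivity
    set w : ℝ := θ₁ ^ ((Ln - 1) / 2) with hw
    have hw0 : 0 ≤ w := Real.rpow_nonneg hθ0.le _
    set v : ℝ := τ' ^ 2 / (n : ℝ) ^ 2 + C * (((n : ℝ)⁻¹) ^ 2 + (n : ℝ) ^ 2 * w) with hv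
    have hv0 : 0 ≤ v := by rw [hv]; positivity
    -- regime (i)-(ii) bound on the initial block
    have hbound1 : ∀ j ∈ Finset.Ioc 0 t, a n j ≤ u := by
      intro j hj
      rw [Finset.mem_Ioc] at hj
      have hjL : (j : ℝ) ≤ Ln := le_trans (Nat.cast_le.mpr hj.2) htL
      rcases le_or_gt ((j : ℝ)) (η * Real.log n) with h | h
      · rw [h1 j hj.1 h]; exact hu0
      · refine (h2 j h hjL).trans ?_
        rw [hu]
        have hpow : ϑ ^ j ≤ ϑ ^ (η * Real.log n) := by
          rw [← Real.rpow_natCast ϑ j]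
          exact Real.rpow_le_rpow_of_exponent_ge hϑ0 hϑ1.le h.le
        refine mul_le_mul_of_nonneg_right (mul_le_mul_of_nonneg_left
          (add_le_add_left (mul_le_mul_of_nonneg_right
            (mul_le_mul_of_nonneg_left hpow hC.le) (Real.rpow_nonneg hn0.le _)) Cz)
          (div_nonneg hτ'.le hn0.le)) (Real.rpow_nonneg hn0.le _)
    have hsum1 : ∑ j ∈ Finset.Ioc 0 t, a n j ≤ Ln * u := by
      have h := Finset.sum_le_card_nsmul (Finset.Ioc 0 t) (a n) u hbound1
      rw [Nat.card_Ioc, Nat.sub_zero, nsmul_eq_mul] at h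
      exact h.trans (mul_le_mul_of_nonneg_right htL hu0)
    -- regime (iii) bound on the tail block
    have hbound2 : ∀ j ∈ Finset.Ioc t M, a n j ≤ v := by
      intro j hj
      rw [Finset.mem_Ioc] at hj
      have hfloorj : Nat.floor Ln < j := by
        rcases hj with ⟨hj1, hj2⟩
        omega
      have hjL : Ln < (j : ℝ) := by
        have h' := Nat.lt_floor_add_one Ln
        have h'' : (Nat.floor Ln : ℝ) + 1 ≤ j := by exact_mod_cast hfloorj
        linarith
      have h3' := (abs_le.mp (h3 j hjL)).2
      have hm2 : m n ^ 2 ≤ τ' ^ 2 / (n : ℝ) ^ 2 := by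
        have hmn := hm n (by omega)
        have h0 := hm0 n
        have : m n ^ 2 ≤ (τ' / n) ^ 2 := by nlinarith
        calc m n ^ 2 ≤ (τ' / n) ^ 2 := this
          _ = τ' ^ 2 / (n : ℝ) ^ 2 := by rw [div_pow]
      have hθj : θ₁ ^ (j / 2) ≤ w := by
        rw [← Real.rpow_natCast θ₁ (j / 2), hw]
        apply Real.rpow_le_rpow_of_exponent_ge hθ0 hθ1.le
        have h2j : (j : ℝ) ≤ 2 * ((j / 2 : ℕ) : ℝ) + 1 := by
          have : j ≤ 2 * (j / 2) + 1 := by omega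
          exact_mod_cast this
        linarith
      calc a n j ≤ m n ^ 2 + C * (((n : ℝ)⁻¹) ^ 2 + (n : ℝ) ^ 2 * θ₁ ^ (j / 2)) := by
            linarith
        _ ≤ v := by
            rw [hv]
            refine add_le_add hm2 (mul_le_mul_of_nonneg_left
              (add_le_add le_rfl (mul_le_mul_of_nonneg_left hθj (by positivity))) hC.le)
    have hsum2 : ∑ j ∈ Finset.Ioc t M, a n j ≤ (M : ℝ) * v := by
      have h := Finset.sum_le_card_nsmul (Finset.Ioc t M) (a n) v hbound2
      rw [Nat.card_Ioc, nsmul_eq_mul] at h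
      refine h.trans (mul_le_mul_of_nonneg_right ?_ hv0)
      exact_mod_cast Nat.sub_le M t
    have hsplit : ∑ j ∈ Finset.Icc 1 M, a n j =
        ∑ j ∈ Finset.Ioc 0 t, a n j + ∑ j ∈ Finset.Ioc t M, a n j := by
      have hIcc : Finset.Icc 1 M = Finset.Ioc 0 M := by
        ext x; simp only [Finset.mem_Icc, Finset.mem_Ioc]; omega
      rw [hIcc, Finset.sum_Ioc_consecutive _ (Nat.zero_le t) htM]
    -- the first block contributes the first two terms
    have hA : (n : ℝ) * (Ln * u) =
        τ' * C * (Ln * ϑ ^ (η * Real.log n)) + τ' * Cz * (Ln * (n : ℝ) ^ (-(1 : ℝ) / 2)) := by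
      have hhalf : (n : ℝ) ^ ((1 : ℝ) / 2) * (n : ℝ) ^ (-(1 : ℝ) / 2) = 1 := by
        rw [← Real.rpow_add hn0]; norm_num
      have hninv : (n : ℝ) * (n : ℝ)⁻¹ = 1 := mul_inv_cancel₀ hne
      rw [hu]
      rw [div_eq_mul_inv]
      linear_combination (τ' * Ln * C * ϑ ^ (η * Real.log n) * ((n : ℝ) * (n : ℝ)⁻¹)) * hhalf
        + (τ' * Ln * C * ϑ ^ (η * Real.log n) + τ' * Cz * Ln * (n : ℝ) ^ (-(1 : ℝ) / 2)) * hninv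
    -- the tail block contributes the last two terms
    have hB : (n : ℝ) * ((M : ℝ) * v) ≤
        (τ' ^ 2 + C) * ((k n : ℝ))⁻¹ + C * ((n : ℝ) ^ (4 : ℕ) * w) := by
      have hMkn : (M : ℝ) ≤ (n : ℝ) / (k n : ℝ) := by
        rw [hM]; exact_mod_cast Nat.cast_div_le
      have hMn : (M : ℝ) ≤ (n : ℝ) := by
        exact_mod_cast Nat.div_le_self n (k n)
      have hM0 : (0 : ℝ) ≤ (M : ℝ) := Nat.cast_nonneg M
      have hk0 : (0 : ℝ) < (k n : ℝ) := by exact_mod_cast hkpos n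
      have hMv : (n : ℝ) * ((M : ℝ) * v) =
          (τ' ^ 2 + C) * ((M : ℝ) / (n : ℝ)) + C * ((n : ℝ) ^ (3 : ℕ) * (M : ℝ) * w) := by
        rw [hv]; field_simp; ring
      rw [hMv]
      have hfrac : (M : ℝ) / (n : ℝ) ≤ ((k n : ℝ))⁻¹ := by
        rw [div_le_iff₀ hn0]
        calc (M : ℝ) ≤ (n : ℝ) / (k n : ℝ) := hMkn
          _ = ((k n : ℝ))⁻¹ * (n : ℝ) := by ring
      have hcube : (n : ℝ) ^ (3 : ℕ) * (M : ℝ) * w ≤ (n : ℝ) ^ (4 : ℕ) * w := by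
        have hn3' : (n : ℝ) ^ (3 : ℕ) * (M : ℝ) ≤ (n : ℝ) ^ (4 : ℕ) := by
          calc (n : ℝ) ^ (3 : ℕ) * (M : ℝ) ≤ (n : ℝ) ^ (3 : ℕ) * (n : ℝ) := by
                exact mul_le_mul_of_nonneg_left hMn (by positivity)
            _ = (n : ℝ) ^ (4 : ℕ) := by ring
        exact mul_le_mul_of_nonneg_right hn3' hw0
      have hτC : (0 : ℝ) ≤ τ' ^ 2 + C := by positivity
      exact add_le_add (mul_le_mul_of_nonneg_left hfrac hτC)
        (mul_le_mul_of_nonneg_left hcube hC.le)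
    calc (n : ℝ) * ∑ j ∈ Finset.Icc 1 M, a n j
        ≤ (n : ℝ) * (Ln * u + (M : ℝ) * v) := by
          rw [hsplit]
          exact mul_le_mul_of_nonneg_left (add_le_add hsum1 hsum2) hn0.le
      _ = (n : ℝ) * (Ln * u) + (n : ℝ) * ((M : ℝ) * v) := by ring
      _ ≤ (τ' * C * (Ln * ϑ ^ (η * Real.log n))
            + τ' * Cz * (Ln * (n : ℝ) ^ (-(1 : ℝ) / 2)))
          + ((τ' ^ 2 + C) * ((k n : ℝ))⁻¹ + C * ((n : ℝ) ^ (4 : ℕ) * w)) := by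
          rw [hA]; exact add_le_add le_rfl hB
      _ = τ' * C * (Ln * ϑ ^ (η * Real.log n))
          + τ' * Cz * (Ln * (n : ℝ) ^ (-(1 : ℝ) / 2))
          + (τ' ^ 2 + C) * ((k n : ℝ))⁻¹
          + C * ((n : ℝ) ^ (4 : ℕ) * θ₁ ^ ((Ln - 1) / 2)) := by rw [hw]; ring
  have key0 : ∀ᶠ n : ℕ in atTop,
      0 ≤ (n : ℝ) * ∑ j ∈ Finset.Icc 1 (n / k n), a n j := by
    filter_upwards with n
    exact mul_nonneg (Nat.cast_nonneg n) (Finset.sum_nonneg fun j _ => ha0 n j)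
  exact squeeze_zero' key0 key hBlim
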